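/- On the third branch [σ² + c, ∞), with 0 < λ < λ̃, c > 0, the derivative P_e'(τ) = [e^{-(τ-σ²)/λ̃}(e^{c/λ̃} - 1) + e^{-(τ-σ²)/λ}(1 - e^{c/λ})]/c changes sign from negative to positive at τ* = (λ̃λ/(λ̃-λ))ln Δ + σ²; i.e., P_e'(τ) < 0 for σ² + c ≤ τ < τ* and P_e'(τ) > 0 for τ > τ*. Hence τ* is the global minimizer of P_e on [σ² + c, ∞). -/

import Mathlib

open Real

/-- On the third branch, the derivative of the DEP changes sign from negative to
positive at `τ*`, hence `τ*` is the global minimizer on `[σ² + c, ∞)`. -/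
theorem stmt17 (lam lamt c σ2 : ℝ) (h0 : 0 < lam) (hll : lam < lamt) (hc : 0 < c)
    (hσ : 0 ≤ σ2) :
    let Pe : ℝ → ℝ := fun τ =>
      1 + (lamt * Real.exp (-(τ - σ2) / lamt) * (1 - Real.exp (c / lamt)) +
           lam * Real.exp (-(τ - σ2) / lam) * (Real.exp (c / lam) - 1)) / c
    let Pe' : ℝ → ℝ := fun τ =>
      (Real.exp (-(τ - σ2) / lamt) * (Real.exp (c / lamt) - 1) +
       Real.exp (-(τ - σ2) / lam) * (1 - Real.exp (c / lam))) / c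
    let Δ : ℝ := (Real.exp (c / lam) - 1) / (Real.exp (c / lamt) - 1)
    let τs : ℝ := lamt * lam / (lamt - lam) * Real.log Δ + σ2
    (∀ τ, σ2 + c ≤ τ → τ < τs → Pe' τ < 0) ∧
    (∀ τ, τs < τ → 0 < Pe' τ) ∧
    (∀ τ, σ2 + c ≤ τ → Pe τs ≤ Pe τ) := by
  intro Pe Pe' Δ τs
  have hlt : 0 < lamt := h0.trans hll
  set A : ℝ := Real.exp (c / lamt) - 1 with hAdef
  set B : ℝ := Real.exp (c / lam) - 1 with hBdef
  have hApos : 0 < A := sub_pos.mpr (by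
    rw [show (1:ℝ) = Real.exp 0 by simp]
    exact Real.exp_lt_exp.mpr (by positivity))
  have hBpos : 0 < B := sub_pos.mpr (by
    rw [show (1:ℝ) = Real.exp 0 by simp]
    exact Real.exp_lt_exp.mpr (by positivity))
  have hba : c / lamt < c / lam := by
    apply div_lt_div_of_pos_left hc h0 hll
  have hAB : A < B := sub_lt_sub_right (Real.exp_lt_exp.mpr hba) 1
  have hΔeq : Δ = B / A := rfl
  have hΔpos : 0 < Δ := by rw [hΔeq]; positivity
  set k : ℝ := (lamt - lam) / (lam * lamt) with hkdef
  have hk : 0 < k := by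
    apply div_pos (by linarith) (by positivity)
  have hτs : τs = Real.log Δ / k + σ2 := by
    have : lamt * lam / (lamt - lam) = 1 / k := by
      rw [hkdef]; field_simp
    simp only [τs, this]; ring
  -- rewrite the derivative
  have key : ∀ τ, Pe' τ = Real.exp (-(τ - σ2) / lam) *
      (Real.exp ((τ - σ2) * k) * A - B) / c := by
    intro τ
    simp only [Pe']
    rw [show -(τ - σ2) / lamt = -(τ - σ2) / lam + (τ - σ2) * k by
      rw [hkdef]; field_simp; ring, Real.exp_add]
    ring
  have sign_pos : ∀ τ, τs < τ → 0 < Pe' τ := by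
    intro τ hτ
    rw [key]
    apply div_pos _ hc
    apply mul_pos (Real.exp_pos _)
    rw [sub_pos, ← div_lt_iff₀ hApos,
      ← Real.exp_log (show (0:ℝ) < B / A by positivity), Real.exp_lt_exp]
    rw [hτs] at hτ
    have : Real.log Δ < (τ - σ2) * k := by
      rw [← div_lt_iff₀ hk]; linarith
    rw [hΔeq] at this; linarith
  have sign_neg : ∀ τ, τ < τs → Pe' τ < 0 := by
    intro τ hτ
    rw [key]
    apply div_neg_of_neg_of_pos _ hc
    apply mul_neg_of_pos_of_neg (Real.exp_pos _)
    rw [sub_neg, ← lt_div_iff₀ hApos,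
      ← Real.exp_log (show (0:ℝ) < B / A by positivity), Real.exp_lt_exp]
    rw [hτs] at hτ
    have : (τ - σ2) * k < Real.log Δ := by
      rw [← lt_div_iff₀ hk]; linarith
    rw [hΔeq] at this; linarith
  -- τs is above σ2 + c
  have hτs_ge : σ2 + c ≤ τs := by
    rw [hτs]
    have h1 : c * k ≤ Real.log Δ := by
      rw [hΔeq, Real.le_log_iff_exp_le (by positivity), le_div_iff₀ hApos]
      have hck : c * k = c / lam - c / lamt := by
        rw [hkdef]; field_simp
      rw [hck, Real.exp_sub]
      rw [hAdef, hBdef, div_mul_eq_mul_div, div_le_iff₀ (Real.exp_pos _)]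
      have h4 : Real.exp (c / lamt) ≤ Real.exp (c / lam) := by
        rw [Real.exp_le_exp]; linarith
      nlinarith [Real.exp_pos (c / lam), Real.exp_pos (c / lamt)]
    have : c ≤ Real.log Δ / k := by
      rw [le_div_iff₀ hk]; linarith [h1]
    linarith
  -- derivative of Pe
  have hderiv : ∀ τ : ℝ, HasDerivAt Pe (Pe' τ) τ := by
    intro τ
    have hu1 : HasDerivAt (fun τ : ℝ => -(τ - σ2) / lamt) (-1 / lamt) τ :=
      (((hasDerivAt_id τ).sub_const σ2).neg).div_const lamt
    have hu2 : HasDerivAt (fun τ : ℝ => -(τ - σ2) / lam) (-1 / lam) τ :=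
      (((hasDerivAt_id τ).sub_const σ2).neg).div_const lam
    have he1 := hu1.exp
    have he2 := hu2.exp
    have h1 := ((he1.const_mul lamt).mul_const (1 - Real.exp (c / lamt)))
    have h2 := ((he2.const_mul lam).mul_const (Real.exp (c / lam) - 1))
    have h3 := ((h1.add h2).div_const c).const_add 1
    refine h3.congr_deriv (Eq.symm ?_)
    simp only [Pe']
    field_simp
    ring
  have hcont : Continuous Pe := by
    have : Differentiable ℝ Pe := fun x => (hderiv x).differentiableAt
    exact this.continuous
  have hderiv' : ∀ τ : ℝ, deriv Pe τ = Pe' τ := fun τ => (hderiv τ).deriv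
  refine ⟨fun τ _ hτ => sign_neg τ hτ, sign_pos, ?_⟩
  intro τ hτ
  rcases le_or_gt τ τs with hle | hlt
  · have hanti : AntitoneOn Pe (Set.Icc (σ2 + c) τs) := by
      apply antitoneOn_of_deriv_nonpos (convex_Icc _ _) hcont.continuousOn
        (fun x _ => (hderiv x).differentiableAt.differentiableWithinAt)
      intro x hx
      rw [interior_Icc] at hx
      rw [hderiv']
      exact le_of_lt (sign_neg x hx.2)
    exact hanti ⟨hτ, hle⟩ ⟨hτs_ge, le_refl _⟩ hle
  · have hmono : MonotoneOn Pe (Set.Ici τs) := by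
      apply monotoneOn_of_deriv_nonneg (convex_Ici _) hcont.continuousOn
        (fun x _ => (hderiv x).differentiableAt.differentiableWithinAt)
      intro x hx
      rw [interior_Ici] at hx
      rw [hderiv']
      exact le_of_lt (sign_pos x hx)
    exact hmono (Set.self_mem_Ici) (le_of_lt hlt) (le_of_lt hlt)
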